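/- Let η ∈ {0,1}^ℕ. For any k ∈ ℕ and x ∈ ℕ with s_k(η,x) < ∞: if η(s_k(η,x)) = 1 then W_ℓ(η, s_k(η,x)) = ℓ for all 1 ≤ ℓ ≤ k+1, and if η(s_k(η,x)) = 0 then W_ℓ(η, s_k(η,x)) = 0 for all 1 ≤ ℓ ≤ k+1. -/

import Mathlib

/-- Seat occupation functions 𝒲_k(η,x). -/
def seatW (η : ℕ → ℤ) : ℕ → ℕ → ℤ
  | 0, _ => 0
  | x + 1, k =>
      seatW η x k
        + η (x + 1) * (1 - seatW η x k) * (∏ m ∈ Finset.Ico 1 k, seatW η x m)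
        - (1 - η (x + 1)) * seatW η x k * (∏ m ∈ Finset.Ico 1 k, (1 - seatW η x m))

/-- Boarding indicator η↑_k(x). -/
def seatUp (η : ℕ → ℤ) (k x : ℕ) : ℤ :=
  η x * (1 - seatW η (x - 1) k) * (∏ m ∈ Finset.Ico 1 k, seatW η (x - 1) m)

/-- Alighting indicator η↓_k(x). -/
def seatDown (η : ℕ → ℤ) (k x : ℕ) : ℤ :=
  (1 - η x) * seatW η (x - 1) k * (∏ m ∈ Finset.Ico 1 k, (1 - seatW η (x - 1) m))

/-- Record indicator r(η,x). (Seat events at x have seat number ≤ x.) -/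
def recordInd (η : ℕ → ℤ) (x : ℕ) : ℤ :=
  1 - ∑ k ∈ Finset.Icc 1 x, (seatUp η k x + seatDown η k x)

/-- ξ_k(η,x). -/
def xiSeat (η : ℕ → ℤ) (k x : ℕ) : ℤ :=
  (x : ℤ) - ∑ y ∈ Finset.Icc 1 x, ∑ m ∈ Finset.Icc 1 k, (seatUp η m y + seatDown η m y)

/-- s_k(η,i). -/
noncomputable def sSeat (η : ℕ → ℤ) (k i : ℕ) : ℕ :=
  sInf {x : ℕ | xiSeat η k x = (i : ℤ)}

/-- k-skip map Ψ_k. -/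
noncomputable def skip (η : ℕ → ℤ) (k : ℕ) : ℕ → ℤ := fun x => η (sSeat η k x)

/-- Slot decomposition ζ_k(η,i). -/
noncomputable def zeta (η : ℕ → ℤ) (k i : ℕ) : ℤ :=
  ∑ y ∈ Finset.Icc (sSeat η k i + 1) (sSeat η k (i + 1)),
    (seatUp η k y - seatUp η (k + 1) y)

/-- Carrier with capacity ℓ. -/
def carrier (η : ℕ → ℤ) (ℓ : ℕ) : ℕ → ℤ
  | 0 => 0
  | x + 1 =>
      if η (x + 1) = 1 ∧ carrier η ℓ x < (ℓ : ℤ) then carrier η ℓ x + 1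
      else if η (x + 1) = 0 ∧ 0 < carrier η ℓ x then carrier η ℓ x - 1
      else carrier η ℓ x

/-- Carrier with infinite capacity. -/
def carrierInf (η : ℕ → ℤ) : ℕ → ℤ
  | 0 => 0
  | x + 1 => if η (x + 1) = 1 then carrierInf η x + 1 else max (carrierInf η x - 1) 0

/-- One-step BBS(ℓ) evolution. -/
def tEvol (η : ℕ → ℤ) (ℓ : ℕ) : ℕ → ℤ :=
  fun x => η x + carrier η ℓ (x - 1) - carrier η ℓ x

/-- One-step BBS(∞) evolution. -/
def tEvolInf (η : ℕ → ℤ) : ℕ → ℤ :=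
  fun x => η x + carrierInf η (x - 1) - carrierInf η x

lemma prod01 {s : Finset ℕ} {f : ℕ → ℤ} (h : ∀ i ∈ s, f i = 0 ∨ f i = 1) :
    (∏ i ∈ s, f i) = 0 ∨ (∏ i ∈ s, f i) = 1 := by
  induction s using Finset.induction with
  | empty => simp
  | @insert a s ha ih =>
    rw [Finset.prod_insert ha]
    rcases h a (by simp) with h0 | h1
    · left; rw [h0]; ring
    · rcases ih (fun i hi => h i (by simp [hi])) with h0 | h1'
      · left; rw [h0]; ring
      · right; rw [h1, h1']; ring

lemma telescope (f : ℕ → ℤ) (l : ℕ) :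
    (∑ m ∈ Finset.Icc 1 l, (1 - f m) * ∏ j ∈ Finset.Ico 1 m, f j)
      = 1 - ∏ m ∈ Finset.Icc 1 l, f m := by
  induction l with
  | zero => simp
  | succ n ih =>
    rw [show Finset.Icc 1 (n+1) = insert (n+1) (Finset.Icc 1 n) from
        (Finset.insert_Icc_right_eq_Icc_add_one (by omega)).symm,
      Finset.sum_insert (by simp), Finset.prod_insert (by simp), ih,
      Finset.Ico_add_one_right_eq_Icc]
    ring

lemma seatW01 {η : ℕ → ℤ} (hη : ∀ x, η x = 0 ∨ η x = 1) :
    ∀ x k, seatW η x k = 0 ∨ seatW η x k = 1 := by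
  intro x
  induction x with
  | zero => intro k; left; rfl
  | succ n ih =>
    intro k
    have hP := prod01 (s := Finset.Ico 1 k) (f := fun m => seatW η n m)
      (fun i _ => ih i)
    have hQ := prod01 (s := Finset.Ico 1 k) (f := fun m => 1 - seatW η n m)
      (fun i _ => by rcases ih i with h | h <;> simp [h])
    have he : seatW η (n+1) k =
        seatW η n k
        + η (n + 1) * (1 - seatW η n k) * (∏ m ∈ Finset.Ico 1 k, seatW η n m)
        - (1 - η (n + 1)) * seatW η n k * (∏ m ∈ Finset.Ico 1 k, (1 - seatW η n m)) := rfl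
    rw [he]
    rcases hη (n+1) with h | h <;> rcases ih k with hw | hw <;>
      rcases hP with p | p <;> rcases hQ with q | q <;>
      rw [h, hw, p, q] <;> norm_num

lemma sum01 {s : Finset ℕ} {f : ℕ → ℤ} (h : ∀ i ∈ s, f i = 0 ∨ f i = 1) :
    ((∏ i ∈ s, f i) = 1 ∧ (∑ i ∈ s, f i) = s.card) ∨
    ((∏ i ∈ s, f i) = 0 ∧ (∑ i ∈ s, f i) < s.card) := by
  induction s using Finset.induction with
  | empty => simp
  | @insert a s ha ih =>
    rw [Finset.prod_insert ha, Finset.sum_insert ha, Finset.card_insert_of_notMem ha]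
    push_cast
    rcases h a (by simp) with h0 | h1 <;>
      rcases ih (fun i hi => h i (by simp [hi])) with ⟨p, q⟩ | ⟨p, q⟩ <;>
      [skip; skip; skip; skip] <;>
      first
      | (left; constructor; · rw [h1, p]; ring
         · rw [h1]; omega)
      | (right; constructor; · first | (rw [h0]; ring) | (rw [p]; ring)
         · omega)

lemma carrier_eq_sum {η : ℕ → ℤ} (hη : ∀ x, η x = 0 ∨ η x = 1) :
    ∀ (x ℓ : ℕ), carrier η ℓ x = ∑ m ∈ Finset.Icc 1 ℓ, seatW η x m := by
  intro x
  induction x with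
  | zero => intro ℓ; simp [carrier, seatW]
  | succ n ih =>
    intro ℓ
    have hS : (∑ m ∈ Finset.Icc 1 ℓ, seatW η (n+1) m)
        = (∑ m ∈ Finset.Icc 1 ℓ, seatW η n m)
          + η (n+1) * (1 - ∏ m ∈ Finset.Icc 1 ℓ, seatW η n m)
          - (1 - η (n+1)) * (1 - ∏ m ∈ Finset.Icc 1 ℓ, (1 - seatW η n m)) := by
      have e1 := telescope (fun m => seatW η n m) ℓ
      have e2 := telescope (fun m => 1 - seatW η n m) ℓ
      simp only at e1 e2
      calc (∑ m ∈ Finset.Icc 1 ℓ, seatW η (n+1) m)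
          = ∑ m ∈ Finset.Icc 1 ℓ,
              (seatW η n m
               + η (n+1) * ((1 - seatW η n m) * ∏ j ∈ Finset.Ico 1 m, seatW η n j)
               - (1 - η (n+1)) *
                  ((1 - (1 - seatW η n m)) * ∏ j ∈ Finset.Ico 1 m, (1 - seatW η n j))) := by
            refine Finset.sum_congr rfl (fun m _ => ?_)
            show seatW η n m
              + η (n + 1) * (1 - seatW η n m) * (∏ j ∈ Finset.Ico 1 m, seatW η n j)
              - (1 - η (n + 1)) * seatW η n m * (∏ j ∈ Finset.Ico 1 m, (1 - seatW η n j)) = _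
            ring
        _ = (∑ m ∈ Finset.Icc 1 ℓ, seatW η n m)
            + η (n+1) * (∑ m ∈ Finset.Icc 1 ℓ,
                (1 - seatW η n m) * ∏ j ∈ Finset.Ico 1 m, seatW η n j)
            - (1 - η (n+1)) * (∑ m ∈ Finset.Icc 1 ℓ,
                (1 - (1 - seatW η n m)) * ∏ j ∈ Finset.Ico 1 m, (1 - seatW η n j)) := by
            rw [Finset.sum_sub_distrib, Finset.sum_add_distrib, ← Finset.mul_sum,
              ← Finset.mul_sum]
        _ = _ := by rw [e1, e2]
    have hcard : (Finset.Icc 1 ℓ).card = ℓ := by rw [Nat.card_Icc]; omega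
    have hW : ∀ i ∈ Finset.Icc 1 ℓ, seatW η n i = 0 ∨ seatW η n i = 1 :=
      fun i _ => seatW01 hη n i
    have h1s := sum01 (s := Finset.Icc 1 ℓ) (f := fun m => seatW η n m) hW
    have h2s := sum01 (s := Finset.Icc 1 ℓ) (f := fun m => 1 - seatW η n m)
      (fun i hi => by rcases hW i hi with h | h <;> simp [h])
    simp only [hcard] at h1s h2s
    have hsub : (∑ m ∈ Finset.Icc 1 ℓ, (1 - seatW η n m))
        = (ℓ : ℤ) - ∑ m ∈ Finset.Icc 1 ℓ, seatW η n m := by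
      rw [Finset.sum_sub_distrib, Finset.sum_const, hcard]; ring
    rw [hsub] at h2s
    have hc : carrier η ℓ (n+1)
        = if η (n + 1) = 1 ∧ carrier η ℓ n < (ℓ : ℤ) then carrier η ℓ n + 1
          else if η (n + 1) = 0 ∧ 0 < carrier η ℓ n then carrier η ℓ n - 1
          else carrier η ℓ n := rfl
    rw [hc, ih ℓ, hS]
    rcases hη (n+1) with h | h <;> rw [h] <;>
      rcases h1s with ⟨p1, q1⟩ | ⟨p1, q1⟩ <;> rcases h2s with ⟨p2, q2⟩ | ⟨p2, q2⟩ <;>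
      rw [p1, p2] <;> split_ifs <;> omega

lemma event_sum (η : ℕ → ℤ) (k n : ℕ) :
    (∑ m ∈ Finset.Icc 1 k, (seatUp η m (n+1) + seatDown η m (n+1)))
      = η (n+1) * (1 - ∏ m ∈ Finset.Icc 1 k, seatW η n m)
        + (1 - η (n+1)) * (1 - ∏ m ∈ Finset.Icc 1 k, (1 - seatW η n m)) := by
  have e1 := telescope (fun m => seatW η n m) k
  have e2 := telescope (fun m => 1 - seatW η n m) k
  simp only at e1 e2
  calc (∑ m ∈ Finset.Icc 1 k, (seatUp η m (n+1) + seatDown η m (n+1)))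
      = ∑ m ∈ Finset.Icc 1 k,
          (η (n+1) * ((1 - seatW η n m) * ∏ j ∈ Finset.Ico 1 m, seatW η n j)
           + (1 - η (n+1)) *
              ((1 - (1 - seatW η n m)) * ∏ j ∈ Finset.Ico 1 m, (1 - seatW η n j))) := by
        refine Finset.sum_congr rfl (fun m _ => ?_)
        show η (n+1) * (1 - seatW η (n+1-1) m) * (∏ j ∈ Finset.Ico 1 m, seatW η (n+1-1) j)
          + (1 - η (n+1)) * seatW η (n+1-1) m
              * (∏ j ∈ Finset.Ico 1 m, (1 - seatW η (n+1-1) j)) = _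
        simp only [Nat.add_sub_cancel]
        ring
    _ = η (n+1) * (∑ m ∈ Finset.Icc 1 k,
            (1 - seatW η n m) * ∏ j ∈ Finset.Ico 1 m, seatW η n j)
        + (1 - η (n+1)) * (∑ m ∈ Finset.Icc 1 k,
            (1 - (1 - seatW η n m)) * ∏ j ∈ Finset.Ico 1 m, (1 - seatW η n j)) := by
        rw [Finset.sum_add_distrib, ← Finset.mul_sum, ← Finset.mul_sum]
    _ = _ := by rw [e1, e2]

lemma xi_succ (η : ℕ → ℤ) (k n : ℕ) :
    xiSeat η k (n+1) = xiSeat η k n + 1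
      - (∑ m ∈ Finset.Icc 1 k, (seatUp η m (n+1) + seatDown η m (n+1))) := by
  unfold xiSeat
  rw [Finset.sum_Icc_succ_top (by omega)]
  push_cast
  ring


/-- carrier values at the positions s_k(η,x) (Lemma carrier_cap). -/
theorem carrier_at_sSeat (η : ℕ → ℤ) (hη : ∀ x, η x = 0 ∨ η x = 1)
    (k : ℕ) (hk : 1 ≤ k) (x : ℕ) (hx : 1 ≤ x)
    (hfin : ∃ y, xiSeat η k y = (x : ℤ)) :
    (η (sSeat η k x) = 1 → ∀ ℓ, 1 ≤ ℓ → ℓ ≤ k + 1 →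
      carrier η ℓ (sSeat η k x) = (ℓ : ℤ)) ∧
    (η (sSeat η k x) = 0 → ∀ ℓ, 1 ≤ ℓ → ℓ ≤ k + 1 →
      carrier η ℓ (sSeat η k x) = 0) := by
  have hne : Set.Nonempty {y : ℕ | xiSeat η k y = (x : ℤ)} := hfin
  have hmem : xiSeat η k (sSeat η k x) = (x : ℤ) := Nat.sInf_mem hne
  have hxi0 : xiSeat η k 0 = 0 := by simp [xiSeat]
  have hpos : 1 ≤ sSeat η k x := by
    rcases Nat.eq_zero_or_pos (sSeat η k x) with h0 | h
    · exfalso; rw [h0, hxi0] at hmem; omega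
    · exact h
  obtain ⟨t, ht⟩ : ∃ t, sSeat η k x = t + 1 := ⟨sSeat η k x - 1, by omega⟩
  rw [ht] at hmem ⊢
  have hnot : xiSeat η k t ≠ (x : ℤ) := by
    intro hcon
    have hle : sSeat η k x ≤ t := Nat.sInf_le hcon
    omega
  have hrec := xi_succ η k t
  have hES := event_sum η k t
  have hP01 := prod01 (s := Finset.Icc 1 k) (f := fun m => seatW η t m)
    (fun i _ => seatW01 hη t i)
  have hQ01 := prod01 (s := Finset.Icc 1 k) (f := fun m => 1 - seatW η t m)
    (fun i _ => by rcases seatW01 hη t i with h | h <;> simp [h])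
  have hE01 : (∑ m ∈ Finset.Icc 1 k, (seatUp η m (t+1) + seatDown η m (t+1))) = 0
      ∨ (∑ m ∈ Finset.Icc 1 k, (seatUp η m (t+1) + seatDown η m (t+1))) = 1 := by
    rw [hES]
    rcases hη (t+1) with h | h <;> rw [h] <;>
      rcases hP01 with p | p <;> rcases hQ01 with q | q <;> rw [p, q] <;> norm_num
  have hE0 : (∑ m ∈ Finset.Icc 1 k, (seatUp η m (t+1) + seatDown η m (t+1))) = 0 := by
    rcases hE01 with h | h
    · exact h
    · exfalso; rw [h] at hrec; omega
  rw [hE0] at hES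
  rcases hη (t+1) with hv | hv
  · -- η (t+1) = 0 : all seats 1..k empty at t
    rw [hv] at hES
    have hQ : (∏ m ∈ Finset.Icc 1 k, (1 - seatW η t m)) = 1 := by
      rcases hQ01 with q | q
      · exfalso; rw [q] at hES; rcases hP01 with p | p <;> rw [p] at hES <;> norm_num at hES
      · exact q
    have hall : ∀ m ∈ Finset.Icc 1 k, seatW η t m = 0 := by
      intro m hm
      rcases seatW01 hη t m with h | h
      · exact h
      · exfalso
        have hz : (∏ m ∈ Finset.Icc 1 k, (1 - seatW η t m)) = 0 :=
          Finset.prod_eq_zero hm (by rw [h]; ring)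
        rw [hQ] at hz; norm_num at hz
    constructor
    · intro hcon; rw [hv] at hcon; norm_num at hcon
    · intro _ ℓ hl1 hl2
      have hcs : ∀ j, carrier η j t = ∑ m ∈ Finset.Icc 1 j, seatW η t m :=
        carrier_eq_sum hη t
      have hcar : carrier η ℓ (t+1)
          = if η (t + 1) = 1 ∧ carrier η ℓ t < (ℓ : ℤ) then carrier η ℓ t + 1
            else if η (t + 1) = 0 ∧ 0 < carrier η ℓ t then carrier η ℓ t - 1
            else carrier η ℓ t := rfl
      rcases Nat.lt_or_ge ℓ (k+1) with hlk | hlk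
      · have hsum : carrier η ℓ t = 0 := by
          rw [hcs ℓ, Finset.sum_congr rfl
            (fun m hm => hall m (by simp only [Finset.mem_Icc] at hm ⊢; omega))]
          simp
        rw [hcar]; split_ifs <;> omega
      · have hleq : ℓ = k + 1 := by omega
        subst hleq
        have hsum : carrier η (k+1) t = seatW η t (k+1) := by
          rw [hcs (k+1), Finset.sum_Icc_succ_top (by omega),
            Finset.sum_congr rfl (fun m hm => hall m hm)]
          simp
        have hw := seatW01 hη t (k+1)
        rw [hcar]; split_ifs <;> omega
  · -- η (t+1) = 1 : all seats 1..k occupied at t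
    rw [hv] at hES
    have hP : (∏ m ∈ Finset.Icc 1 k, seatW η t m) = 1 := by
      rcases hP01 with p | p
      · exfalso; rw [p] at hES; rcases hQ01 with q | q <;> rw [q] at hES <;> norm_num at hES
      · exact p
    have hall : ∀ m ∈ Finset.Icc 1 k, seatW η t m = 1 := by
      intro m hm
      rcases seatW01 hη t m with h | h
      · exfalso
        have hz : (∏ m ∈ Finset.Icc 1 k, seatW η t m) = 0 := Finset.prod_eq_zero hm h
        rw [hP] at hz; norm_num at hz
      · exact h
    constructor
    · intro _ ℓ hl1 hl2
      have hcs : ∀ j, carrier η j t = ∑ m ∈ Finset.Icc 1 j, seatW η t m :=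
        carrier_eq_sum hη t
      have hcar : carrier η ℓ (t+1)
          = if η (t + 1) = 1 ∧ carrier η ℓ t < (ℓ : ℤ) then carrier η ℓ t + 1
            else if η (t + 1) = 0 ∧ 0 < carrier η ℓ t then carrier η ℓ t - 1
            else carrier η ℓ t := rfl
      rcases Nat.lt_or_ge ℓ (k+1) with hlk | hlk
      · have hsum : carrier η ℓ t = (ℓ : ℤ) := by
          rw [hcs ℓ, Finset.sum_congr rfl
            (fun m hm => hall m (by simp only [Finset.mem_Icc] at hm ⊢; omega)),
            Finset.sum_const, Nat.card_Icc]
          simp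
        rw [hcar]; split_ifs <;> omega
      · have hleq : ℓ = k + 1 := by omega
        subst hleq
        have hsum : carrier η (k+1) t = (k : ℤ) + seatW η t (k+1) := by
          rw [hcs (k+1), Finset.sum_Icc_succ_top (by omega),
            Finset.sum_congr rfl (fun m hm => hall m hm), Finset.sum_const, Nat.card_Icc]
          simp
        have hw := seatW01 hη t (k+1)
        rw [hcar]; split_ifs <;> omega
    · intro hcon; rw [hv] at hcon; norm_num at hcon
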